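/- Let n ≥ 1 and let D : ℝⁿ × ℝⁿ → [0, ∞) be such that D(F, F) = 0 for all F ∈ ℝⁿ and such that the function D² is twice continuously differentiable. Then for every F, Ḟ ∈ ℝⁿ, lim_{ε → 0} (1/(2ε²)) D²(F + εḞ, F) = (1/4) ∂²_{F₁²} D²(F, F)[Ḟ, Ḟ], where ∂²_{F₁²} D²(F₁, F₂) denotes the second derivative (Hessian bilinear form) of D² with respect to its first argument evaluated at (F₁, F₂). -/

import Mathlib

/-- For a nonnegative dissipation distance `D` vanishing on the diagonal with `D²` twice
continuously differentiable, the dissipation potential limit exists: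
`lim_{ε→0} (1/(2ε²)) D²(F+εḞ, F) = (1/4) ∂²_{F₁²} D²(F,F)[Ḟ,Ḟ]`. -/
theorem statement7 {n : ℕ} (hn : 1 ≤ n)
    (D : EuclideanSpace ℝ (Fin n) → EuclideanSpace ℝ (Fin n) → ℝ)
    (hnonneg : ∀ F G, 0 ≤ D F G)
    (hdiag : ∀ F, D F F = 0)
    (hC2 : ContDiff ℝ 2
      (fun p : EuclideanSpace ℝ (Fin n) × EuclideanSpace ℝ (Fin n) => (D p.1 p.2) ^ 2)) :
    ∀ F Fdot : EuclideanSpace ℝ (Fin n),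
      Filter.Tendsto (fun ε : ℝ => 1 / (2 * ε ^ 2) * (D (F + ε • Fdot) F) ^ 2)
        (nhdsWithin (0 : ℝ) {0}ᶜ)
        (nhds ((1 / 4) * iteratedFDeriv ℝ 2 (fun X => (D X F) ^ 2) F ![Fdot, Fdot])) := by
  intro F v
  set g : EuclideanSpace ℝ (Fin n) → ℝ := fun X => (D X F) ^ 2 with hgdef
  have hpair : ContDiff ℝ 2 (fun X : EuclideanSpace ℝ (Fin n) =>
      (X, F) : EuclideanSpace ℝ (Fin n) → _ × _) := contDiff_id.prodMk contDiff_const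
  have hg : ContDiff ℝ 2 g := hC2.comp hpair
  have hg0 : g F = 0 := by simp [hgdef, hdiag]
  have hmin : IsLocalMin g F := by
    apply Filter.Eventually.of_forall
    intro X
    rw [hg0]
    exact sq_nonneg _
  have hdg0 : fderiv ℝ g F = 0 := hmin.fderiv_eq_zero
  set φ : ℝ → EuclideanSpace ℝ (Fin n) := fun ε => F + ε • v with hφdef
  have hφ0 : φ 0 = F := by simp [hφdef]
  have hφd : ∀ ε : ℝ, HasDerivAt φ v ε := by
    intro ε
    simpa only [id, id_eq, one_smul] using ((hasDerivAt_id ε).smul_const v).const_add F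
  set h : ℝ → ℝ := fun ε => g (φ ε) with hhdef
  set h1 : ℝ → ℝ := fun ε => fderiv ℝ g (φ ε) v with hh1def
  have hh : ∀ ε : ℝ, HasDerivAt h (h1 ε) ε := fun ε =>
    ((hg.differentiable two_ne_zero).differentiableAt.hasFDerivAt.comp_hasDerivAt ε (hφd ε))
  set T : ℝ := fderiv ℝ (fderiv ℝ g) F v v with hTdef
  have hfd : ContDiff ℝ 1 (fderiv ℝ g) := hg.fderiv_right (le_refl _)
  have hh1 : HasDerivAt h1 T 0 := by
    have h2 : HasFDerivAt (fderiv ℝ g) (fderiv ℝ (fderiv ℝ g) (φ 0)) (φ 0) :=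
      ((hfd.differentiable one_ne_zero).differentiableAt).hasFDerivAt
    have h3 := h2.comp_hasDerivAt 0 (hφd 0)
    have h4 := ((ContinuousLinearMap.apply ℝ ℝ v).hasFDerivAt).comp_hasDerivAt 0 h3
    have h5 : HasDerivAt h1 ((ContinuousLinearMap.apply ℝ ℝ v) (fderiv ℝ (fderiv ℝ g) (φ 0) v)) 0 := h4
    simpa [hTdef, hφ0, ContinuousLinearMap.apply] using h5
  have hh10 : h1 0 = 0 := by simp [hh1def, hφ0, hdg0]
  have hh0 : h 0 = 0 := by simp [hhdef, hφ0, hg0]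
  have hslope : Filter.Tendsto (fun ε : ℝ => h1 ε / ε) (nhdsWithin 0 {0}ᶜ) (nhds T) := by
    have := hh1.tendsto_slope_zero
    simpa [hh10, div_eq_inv_mul] using this
  have key : Filter.Tendsto (fun ε : ℝ => h ε / (2 * ε ^ 2)) (nhdsWithin 0 {0}ᶜ)
      (nhds (T / 4)) := by
    apply HasDerivAt.lhopital_zero_nhdsNE (f' := h1) (g' := fun ε => 4 * ε)
    · exact Filter.Eventually.of_forall fun ε => hh ε
    · refine Filter.Eventually.of_forall fun ε => ?_
      have h5 := (hasDerivAt_pow 2 ε).const_mul (2 : ℝ)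
      refine h5.congr_deriv ?_
      push_cast
      ring
    · filter_upwards [self_mem_nhdsWithin] with ε hε
      simp only [Set.mem_compl_iff, Set.mem_singleton_iff] at hε
      positivity
    · have hc : Continuous h := hg.continuous.comp (by fun_prop : Continuous φ)
      have := hc.tendsto 0
      rw [hh0] at this
      exact this.mono_left nhdsWithin_le_nhds
    · have := (continuous_const.mul (continuous_pow 2) :
        Continuous fun ε : ℝ => 2 * ε ^ 2).tendsto 0
      have h7 : Filter.Tendsto (fun ε : ℝ => 2 * ε ^ 2) (nhdsWithin 0 {0}ᶜ)
          (nhds (2 * (0 : ℝ) ^ 2)) := this.mono_left nhdsWithin_le_nhds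
      simpa using h7
    · have := hslope.div_const 4
      refine this.congr fun ε => ?_
      rw [div_div, mul_comm]
  have hiter : iteratedFDeriv ℝ 2 (fun X => (D X F) ^ 2) F ![v, v] = T := by
    rw [hTdef, iteratedFDeriv_two_apply]
    simp [hgdef]
  rw [hiter]
  have h14 : (1 / 4 : ℝ) * T = T / 4 := by ring
  rw [h14]
  refine key.congr fun ε => ?_
  rw [div_eq_inv_mul, ← one_div]
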